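/- arXiv:1708.09605 — 2 statements merged into one kernel-verified Lean document; each statement's English description precedes it below -/
import Mathlib

section
/- Let S_n be a one-dimensional random walk with i.i.d. increments X_i satisfying E[X] < 0, and suppose ν := sup{t ∈ R : E[exp(t·X)] ≤ 1} > 0. Then for every x ≥ 0, P(sup_{n ≥ 1} S_n ≥ x) ≤ e^{−ν x}. -/
open MeasureTheory ProbabilityTheory
open scoped ENNReal

private lemma lundberg_exp_block {Ω : Type*} [MeasurableSpace Ω]
    (μ : Measure Ω) [IsProbabilityMeasure μ]
    (X : ℕ → Ω → ℝ) (hmeas : ∀ i, Measurable (X i))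
    (hindep : iIndepFun X μ)
    (hident : ∀ i, IdentDistrib (X i) (X 0) μ μ)
    (t : ℝ) (ht : Integrable (fun ω => Real.exp (t * X 0 ω)) μ) :
    ∀ a b : ℕ, Integrable (fun ω => Real.exp (t * ∑ i ∈ Finset.Ico a b, X i ω)) μ ∧
      ∫ ω, Real.exp (t * ∑ i ∈ Finset.Ico a b, X i ω) ∂μ
        = (∫ ω, Real.exp (t * X 0 ω) ∂μ) ^ (b - a) := by
  have hexp : Measurable (fun z : ℝ => Real.exp (t * z)) :=
    (measurable_const.mul measurable_id).exp
  have hid : ∀ i, IdentDistrib (fun ω => Real.exp (t * X i ω))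
      (fun ω => Real.exp (t * X 0 ω)) μ μ := fun i => (hident i).comp hexp
  have hInti : ∀ i, Integrable (fun ω => Real.exp (t * X i ω)) μ :=
    fun i => ((hid i).integrable_iff).mpr ht
  have hVali : ∀ i, ∫ ω, Real.exp (t * X i ω) ∂μ = ∫ ω, Real.exp (t * X 0 ω) ∂μ :=
    fun i => (hid i).integral_eq
  intro a b
  induction b with
  | zero =>
    simp only [Finset.Ico_eq_empty_of_le (Nat.zero_le a), Finset.sum_empty, mul_zero,
      Real.exp_zero, Nat.zero_sub, pow_zero]
    exact ⟨integrable_const 1, by simp⟩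
  | succ b ih =>
    by_cases hab : a ≤ b
    · have hins : Finset.Ico a (b + 1) = insert b (Finset.Ico a b) :=
        Nat.Ico_succ_right_eq_insert_Ico hab
      have hbmem : b ∉ Finset.Ico a b := by simp
      have hfun : (fun ω => Real.exp (t * ∑ i ∈ Finset.Ico a (b + 1), X i ω))
          = fun ω => Real.exp (t * ∑ i ∈ Finset.Ico a b, X i ω) * Real.exp (t * X b ω) := by
        funext ω
        rw [hins, Finset.sum_insert hbmem, ← Real.exp_add]
        ring_nf
      have hip : IndepFun (fun ω => Real.exp (t * ∑ i ∈ Finset.Ico a b, X i ω))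
          (fun ω => Real.exp (t * X b ω)) μ := by
        have h0 : IndepFun (∑ j ∈ Finset.Ico a b, X j) (X b) μ :=
          hindep.indepFun_finset_sum_of_notMem hmeas hbmem
        have h1 := h0.comp hexp hexp
        have e1 : (fun z : ℝ => Real.exp (t * z)) ∘ (∑ j ∈ Finset.Ico a b, X j)
            = fun ω => Real.exp (t * ∑ i ∈ Finset.Ico a b, X i ω) := by
          funext ω; simp [Function.comp, Finset.sum_apply]
        rwa [e1] at h1
      rw [hfun]
      refine ⟨hip.integrable_mul ih.1 (hInti b), ?_⟩
      have hmulint : ∫ ω, Real.exp (t * ∑ i ∈ Finset.Ico a b, X i ω) * Real.exp (t * X b ω) ∂μ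
          = (∫ ω, Real.exp (t * ∑ i ∈ Finset.Ico a b, X i ω) ∂μ)
            * ∫ ω, Real.exp (t * X b ω) ∂μ :=
        hip.integral_fun_mul_eq_mul_integral ih.1.aestronglyMeasurable (hInti b).aestronglyMeasurable
      rw [hmulint, ih.2, hVali b, show b + 1 - a = (b - a) + 1 by omega, pow_succ]
    · have he : Finset.Ico a (b + 1) = ∅ := Finset.Ico_eq_empty (by omega)
      simp only [he, Finset.sum_empty, mul_zero, Real.exp_zero,
        show b + 1 - a = 0 by omega, pow_zero]
      exact ⟨integrable_const 1, by simp⟩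

private lemma lundberg_fixed {Ω : Type*} [MeasurableSpace Ω]
    (μ : Measure Ω) [IsProbabilityMeasure μ]
    (X : ℕ → Ω → ℝ) (hmeas : ∀ i, Measurable (X i))
    (hindep : iIndepFun X μ)
    (hident : ∀ i, IdentDistrib (X i) (X 0) μ μ)
    (t : ℝ) (htpos : 0 < t) (ht : Integrable (fun ω => Real.exp (t * X 0 ω)) μ)
    (hm1 : ∫ ω, Real.exp (t * X 0 ω) ∂μ ≤ 1) (x : ℝ) :
    μ {ω | ∃ n ≥ 1, x ≤ ∑ i ∈ Finset.range n, X i ω} ≤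
      ENNReal.ofReal (Real.exp (-t * x)) := by
  classical
  set m : ℝ := ∫ ω, Real.exp (t * X 0 ω) ∂μ with hm_def
  have hμne : NeZero μ := ⟨IsProbabilityMeasure.ne_zero μ⟩
  have hm0 : 0 < m := integral_exp_pos ht
  set Sn : ℕ → Ω → ℝ := fun n ω => ∑ i ∈ Finset.range n, X i ω with hSn_def
  have measSn : ∀ n, Measurable (Sn n) := fun n =>
    Finset.measurable_sum _ fun i _ => hmeas i
  have hblock := lundberg_exp_block μ X hmeas hindep hident t ht
  have hSint : ∀ n, Integrable (fun ω => Real.exp (t * Sn n ω)) μ := by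
    intro n
    have := (hblock 0 n).1
    simpa [← Finset.range_eq_Ico] using this
  have hSval : ∀ n, ∫ ω, Real.exp (t * Sn n ω) ∂μ = m ^ n := by
    intro n
    have := (hblock 0 n).2
    simpa [← Finset.range_eq_Ico] using this
  set A : ℕ → Set Ω := fun n =>
    {ω | x ≤ Sn n ω ∧ ∀ k ∈ Finset.Ico 1 n, Sn k ω < x} with hA_def
  have hAmeas : ∀ n, MeasurableSet (A n) := by
    intro n
    have : A n = {ω | x ≤ Sn n ω} ∩ ⋂ k ∈ Finset.Ico 1 n, {ω | Sn k ω < x} := by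
      ext ω; simp [hA_def, Set.mem_iInter]
    rw [this]
    exact (measurableSet_le measurable_const (measSn n)).inter
      (MeasurableSet.biInter (Finset.Ico 1 n).countable_toSet
        fun k _ => measurableSet_lt (measSn k) measurable_const)
  have hAdisj : ∀ i j : ℕ, 1 ≤ i → i < j → Disjoint (A i) (A j) := by
    intro i j hi hij
    rw [Set.disjoint_left]
    intro ω hωi hωj
    exact absurd hωi.1 (not_le.mpr (hωj.2 i (Finset.mem_Ico.mpr ⟨hi, hij⟩)))
  -- key bound for a fixed horizon N
  have hkey : ∀ N : ℕ, (μ (⋃ n ∈ Finset.Ico 1 (N + 1), A n)) ≤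
      ENNReal.ofReal (Real.exp (-t * x)) := by
    intro N
    -- per-n inequality
    have hper : ∀ n ∈ Finset.Ico 1 (N + 1),
        Real.exp (t * x) * (μ (A n)).toReal * m ^ (N - n)
          ≤ ∫ ω in A n, Real.exp (t * Sn N ω) ∂μ := by
      intro n hn
      obtain ⟨hn1, hnN⟩ := Finset.mem_Ico.mp hn
      have hnN' : n ≤ N := by omega
      set Y1 : Ω → ℝ := Set.indicator (A n) (fun ω => Real.exp (t * Sn n ω)) with hY1_def
      set Y2 : Ω → ℝ := fun ω => Real.exp (t * ∑ i ∈ Finset.Ico n N, X i ω) with hY2_def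
      -- independence of Y1 and Y2
      have hIndep12 : IndepFun Y1 Y2 μ := by
        have hdisjFin : Disjoint (Finset.range n) (Finset.Ico n N) := by
          rw [Finset.disjoint_left]
          intro i hi hi'
          simp only [Finset.mem_range] at hi
          simp only [Finset.mem_Ico] at hi'
          omega
        have hbase := hindep.indepFun_finset (Finset.range n) (Finset.Ico n N) hdisjFin hmeas
        set psum : ℕ → ({ i // i ∈ Finset.range n } → ℝ) → ℝ :=
          fun k y => ∑ i ∈ (Finset.range n).attach, if (i : ℕ) < k then y i else 0
          with hpsum_def
        have hpsum_meas : ∀ k, Measurable (psum k) := by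
          intro k
          apply Finset.measurable_sum
          intro i _
          by_cases h : (i : ℕ) < k
          · simpa [h] using measurable_pi_apply i
          · simpa [h] using (measurable_const : Measurable fun _ :
              ({ i // i ∈ Finset.range n } → ℝ) => (0 : ℝ))
        have hps : ∀ k, k ≤ n → ∀ ω, psum k (fun i : { i // i ∈ Finset.range n } => X i ω)
            = Sn k ω := by
          intro k hk ω
          have e1 : psum k (fun i : { i // i ∈ Finset.range n } => X i ω)
              = ∑ j ∈ Finset.range n, (if j < k then X j ω else 0) :=
            Finset.sum_attach (Finset.range n) (fun j => if j < k then X j ω else 0)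
          rw [e1, ← Finset.sum_filter]
          congr 1
          ext i
          simp only [Finset.mem_filter, Finset.mem_range]
          omega
        set F : ({ i // i ∈ Finset.range n } → ℝ) → ℝ := fun y =>
          Set.indicator {y' | x ≤ psum n y' ∧ ∀ k ∈ Finset.Ico 1 n, psum k y' < x}
            (fun y' => Real.exp (t * psum n y')) y with hF_def
        set G : ({ i // i ∈ Finset.Ico n N } → ℝ) → ℝ := fun y =>
          Real.exp (t * ∑ i ∈ (Finset.Ico n N).attach, y i) with hG_def
        have hFmeas : Measurable F := by
          apply Measurable.indicator
          · exact (measurable_const.mul (hpsum_meas n)).exp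
          · have : {y' : { i // i ∈ Finset.range n } → ℝ |
                x ≤ psum n y' ∧ ∀ k ∈ Finset.Ico 1 n, psum k y' < x}
                = {y' | x ≤ psum n y'} ∩ ⋂ k ∈ Finset.Ico 1 n, {y' | psum k y' < x} := by
              ext y'; simp [Set.mem_iInter]
            rw [this]
            exact (measurableSet_le measurable_const (hpsum_meas n)).inter
              (MeasurableSet.biInter (Finset.Ico 1 n).countable_toSet
                fun k _ => measurableSet_lt (hpsum_meas k) measurable_const)
        have hGmeas : Measurable G := by
          apply Measurable.exp
          exact measurable_const.mul (Finset.measurable_sum _ fun i _ => measurable_pi_apply i)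
        have hcomp := hbase.comp hFmeas hGmeas
        have e1 : (F ∘ fun ω (i : (Finset.range n : Finset ℕ)) => X i ω) = Y1 := by
          funext ω
          have hc : (x ≤ psum n (fun i : { i // i ∈ Finset.range n } => X i ω)
              ∧ ∀ k ∈ Finset.Ico 1 n, psum k (fun i : { i // i ∈ Finset.range n } => X i ω) < x)
              ↔ ω ∈ A n := by
            constructor
            · rintro ⟨h1, h2⟩
              refine ⟨by rwa [hps n le_rfl ω] at h1, fun k hk => ?_⟩
              have hkn : k ≤ n := le_of_lt (Finset.mem_Ico.mp hk).2
              have := h2 k hk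
              rwa [hps k hkn ω] at this
            · rintro ⟨h1, h2⟩
              refine ⟨by rwa [hps n le_rfl ω], fun k hk => ?_⟩
              have hkn : k ≤ n := le_of_lt (Finset.mem_Ico.mp hk).2
              rw [hps k hkn ω]
              exact h2 k hk
          simp only [Function.comp_apply, hF_def, Set.indicator_apply, Set.mem_setOf_eq,
            hY1_def]
          rw [if_congr hc rfl rfl, hps n le_rfl ω]
        have e2 : (G ∘ fun ω (i : (Finset.Ico n N : Finset ℕ)) => X i ω) = Y2 := by
          funext ω
          simp only [Function.comp_apply, hG_def, hY2_def]
          exact congrArg (fun z => Real.exp (t * z))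
            (Finset.sum_attach (Finset.Ico n N) (fun i => X i ω))
        rwa [e1, e2] at hcomp
      have hY1int : Integrable Y1 μ := (hSint n).indicator (hAmeas n)
      have hY2int : Integrable Y2 μ := (hblock n N).1
      have hY2val : ∫ ω, Y2 ω ∂μ = m ^ (N - n) := (hblock n N).2
      -- indicator splitting
      have hsplit : Set.indicator (A n) (fun ω => Real.exp (t * Sn N ω))
          = fun ω => Y1 ω * Y2 ω := by
        funext ω
        by_cases h : ω ∈ A n
        · simp only [Set.indicator_of_mem h, hY1_def, hY2_def]
          rw [← Real.exp_add, ← mul_add]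
          congr 2
          rw [hSn_def]
          simp only []
          rw [Finset.range_eq_Ico, Finset.range_eq_Ico]
          exact (Finset.sum_Ico_consecutive _ (Nat.zero_le n) hnN').symm
        · simp [Set.indicator_of_notMem h, hY1_def]
      have hprodval : ∫ ω, Y1 ω * Y2 ω ∂μ = (∫ ω, Y1 ω ∂μ) * ∫ ω, Y2 ω ∂μ :=
        hIndep12.integral_fun_mul_eq_mul_integral hY1int.aestronglyMeasurable hY2int.aestronglyMeasurable
      have hval : ∫ ω in A n, Real.exp (t * Sn N ω) ∂μ = (∫ ω, Y1 ω ∂μ) * m ^ (N - n) := by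
        rw [← integral_indicator (hAmeas n), hsplit, hprodval, hY2val]
      have hlow : Real.exp (t * x) * (μ (A n)).toReal ≤ ∫ ω, Y1 ω ∂μ := by
        rw [hY1_def, integral_indicator (hAmeas n)]
        have h1 : ∫ _ω in A n, Real.exp (t * x) ∂μ ≤ ∫ ω in A n, Real.exp (t * Sn n ω) ∂μ := by
          apply setIntegral_mono_on (integrableOn_const (measure_ne_top μ _))
            ((hSint n).integrableOn) (hAmeas n)
          intro ω hω
          exact Real.exp_le_exp.mpr (mul_le_mul_of_nonneg_left hω.1 htpos.le)
        calc Real.exp (t * x) * (μ (A n)).toReal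
            = ∫ _ω in A n, Real.exp (t * x) ∂μ := by rw [setIntegral_const, smul_eq_mul, measureReal_def]; ring
          _ ≤ _ := h1
      calc Real.exp (t * x) * (μ (A n)).toReal * m ^ (N - n)
          ≤ (∫ ω, Y1 ω ∂μ) * m ^ (N - n) :=
            mul_le_mul_of_nonneg_right hlow (pow_nonneg hm0.le _)
        _ = ∫ ω in A n, Real.exp (t * Sn N ω) ∂μ := hval.symm
    -- sum over n
    have hpd : (↑(Finset.Ico 1 (N + 1)) : Set ℕ).Pairwise (Function.onFun Disjoint A) := by
      intro i hi j hj hij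
      simp only [Finset.coe_Ico, Set.mem_Ico] at hi hj
      rcases lt_or_gt_of_ne hij with h | h
      · exact hAdisj i j hi.1 h
      · exact (hAdisj j i hj.1 h).symm
    have hsum_int : ∫ ω in ⋃ n ∈ Finset.Ico 1 (N + 1), A n, Real.exp (t * Sn N ω) ∂μ
        = ∑ n ∈ Finset.Ico 1 (N + 1), ∫ ω in A n, Real.exp (t * Sn N ω) ∂μ :=
      integral_biUnion_finset _ (fun n _ => hAmeas n) hpd
        (fun n _ => (hSint N).integrableOn)
    have hsum_le_total : ∫ ω in ⋃ n ∈ Finset.Ico 1 (N + 1), A n, Real.exp (t * Sn N ω) ∂μ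
        ≤ m ^ N := by
      rw [← hSval N]
      exact setIntegral_le_integral (hSint N) (Filter.Eventually.of_forall fun ω =>
        (Real.exp_pos _).le)
    set P : ℝ := ∑ n ∈ Finset.Ico 1 (N + 1), (μ (A n)).toReal with hP_def
    have hP0 : 0 ≤ P := Finset.sum_nonneg fun n _ => ENNReal.toReal_nonneg
    have hmain : Real.exp (t * x) * P * m ^ N ≤ m ^ N := by
      have h1 : ∀ n ∈ Finset.Ico 1 (N + 1),
          Real.exp (t * x) * (μ (A n)).toReal * m ^ N
            ≤ Real.exp (t * x) * (μ (A n)).toReal * m ^ (N - n) := by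
        intro n hn
        apply mul_le_mul_of_nonneg_left
          (pow_le_pow_of_le_one hm0.le hm1 (by omega))
          (mul_nonneg (Real.exp_pos _).le ENNReal.toReal_nonneg)
      calc Real.exp (t * x) * P * m ^ N
          = ∑ n ∈ Finset.Ico 1 (N + 1), Real.exp (t * x) * (μ (A n)).toReal * m ^ N := by
            rw [hP_def, Finset.mul_sum, Finset.sum_mul]
        _ ≤ ∑ n ∈ Finset.Ico 1 (N + 1), Real.exp (t * x) * (μ (A n)).toReal * m ^ (N - n) :=
            Finset.sum_le_sum h1
        _ ≤ ∑ n ∈ Finset.Ico 1 (N + 1), ∫ ω in A n, Real.exp (t * Sn N ω) ∂μ :=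
            Finset.sum_le_sum hper
        _ = _ := hsum_int.symm
        _ ≤ m ^ N := hsum_le_total
    have hP_le : P ≤ Real.exp (-t * x) := by
      have h2 : Real.exp (t * x) * P ≤ 1 := by
        have hpow : (0 : ℝ) < m ^ N := pow_pos hm0 N
        nlinarith [hmain, hpow]
      have hE := Real.exp_pos (t * x)
      have hinv : Real.exp (-t * x) * Real.exp (t * x) = 1 := by
        rw [← Real.exp_add]; ring_nf; exact Real.exp_zero
      nlinarith [h2, hinv, hE, Real.exp_pos (-t * x),
        mul_le_mul_of_nonneg_right h2 (Real.exp_pos (-t * x)).le]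
    have hμEN : μ (⋃ n ∈ Finset.Ico 1 (N + 1), A n)
        = ∑ n ∈ Finset.Ico 1 (N + 1), μ (A n) :=
      measure_biUnion_finset hpd fun n _ => hAmeas n
    rw [hμEN]
    rw [ENNReal.le_ofReal_iff_toReal_le (by
        exact (ne_of_lt (lt_of_le_of_lt (le_of_eq hμEN.symm) (measure_lt_top μ _))))
      (Real.exp_pos _).le]
    rw [ENNReal.toReal_sum fun n _ => (measure_ne_top μ _)]
    exact hP_le
  -- pass to the limit
  have hsubset : {ω | ∃ n ≥ 1, x ≤ Sn n ω}
      ⊆ ⋃ N : ℕ, ⋃ n ∈ Finset.Ico 1 (N + 1), A n := by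
    intro ω hω
    have hex : ∃ n, 1 ≤ n ∧ x ≤ Sn n ω := by
      obtain ⟨n, hn1, hn2⟩ := hω
      exact ⟨n, hn1, hn2⟩
    set n0 := Nat.find hex with hn0_def
    obtain ⟨hn01, hn02⟩ := Nat.find_spec hex
    have hmem : ω ∈ A n0 := by
      refine ⟨hn02, fun k hk => ?_⟩
      obtain ⟨hk1, hk2⟩ := Finset.mem_Ico.mp hk
      have := Nat.find_min hex hk2
      push_neg at this
      exact this hk1
    exact Set.mem_iUnion.mpr ⟨n0, Set.mem_biUnion (Finset.mem_Ico.mpr ⟨hn01, by omega⟩) hmem⟩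
  have hmono : Monotone (fun N : ℕ => ⋃ n ∈ Finset.Ico 1 (N + 1), A n) := by
    intro N M hNM ω hω
    simp only [Set.mem_iUnion, exists_prop] at hω ⊢
    obtain ⟨n', hn', h'⟩ := hω
    rw [Finset.mem_Ico] at hn'
    exact ⟨n', Finset.mem_Ico.mpr ⟨hn'.1, by omega⟩, h'⟩
  calc μ {ω | ∃ n ≥ 1, x ≤ Sn n ω}
      ≤ μ (⋃ N : ℕ, ⋃ n ∈ Finset.Ico 1 (N + 1), A n) := measure_mono hsubset
    _ = ⨆ N, μ (⋃ n ∈ Finset.Ico 1 (N + 1), A n) := hmono.directed_le.measure_iUnion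
    _ ≤ ENNReal.ofReal (Real.exp (-t * x)) := iSup_le hkey

/-- Lundberg exponential bound: for a random walk with i.i.d. increments of negative mean,
`P(sup_{n ≥ 1} S_n ≥ x) ≤ exp(-ν x)` where `ν = sup{t : E[e^{tX}] ≤ 1} > 0`. -/
theorem lundberg_bound {Ω : Type*} [MeasurableSpace Ω]
    (μ : Measure Ω) [IsProbabilityMeasure μ]
    (X : ℕ → Ω → ℝ) (hmeas : ∀ i, Measurable (X i))
    (hindep : iIndepFun X μ)
    (hident : ∀ i, IdentDistrib (X i) (X 0) μ μ)
    (hint : Integrable (X 0) μ) (hmean : ∫ ω, X 0 ω ∂μ < 0)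
    (ν : ℝ)
    (hν : ν = sSup {t : ℝ | Integrable (fun ω => Real.exp (t * X 0 ω)) μ ∧
      ∫ ω, Real.exp (t * X 0 ω) ∂μ ≤ 1})
    (hνpos : 0 < ν) (x : ℝ) (hx : 0 ≤ x) :
    μ {ω | ∃ n ≥ 1, x ≤ ∑ i ∈ Finset.range n, X i ω} ≤
      ENNReal.ofReal (Real.exp (-ν * x)) := by
  set S : Set ℝ := {t : ℝ | Integrable (fun ω => Real.exp (t * X 0 ω)) μ ∧
      ∫ ω, Real.exp (t * X 0 ω) ∂μ ≤ 1} with hS_def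
  have hS0 : (0 : ℝ) ∈ S := by
    constructor
    · simpa using (integrable_const (1 : ℝ) : Integrable (fun _ : Ω => (1:ℝ)) μ)
    · simp
  have hSne : S.Nonempty := ⟨0, hS0⟩
  have hbdd : BddAbove S := by
    by_contra h
    rw [hν, Real.sSup_of_not_bddAbove h] at hνpos
    exact lt_irrefl 0 hνpos
  -- approximating sequence
  have hseq : ∀ k : ℕ, ∃ tk ∈ S, ν - ν / (k + 1) < tk := by
    intro k
    apply exists_lt_of_lt_csSup hSne
    rw [← hν]
    have : 0 < ν / (k + 1) := div_pos hνpos (by positivity)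
    linarith
  choose tk htkS htk_gt using hseq
  have htk_le : ∀ k, tk k ≤ ν := fun k => hν ▸ le_csSup hbdd (htkS k)
  have htk_pos : ∀ k, 0 < tk k := by
    intro k
    have h1 := htk_gt k
    have h2 : ν / (↑k + 1) ≤ ν := by
      rw [div_le_iff₀ (by positivity : (0:ℝ) < (k:ℝ) + 1)]
      nlinarith [hνpos.le]
    nlinarith [div_pos hνpos (show (0:ℝ) < (k:ℝ)+1 by positivity)]
  have hbound : ∀ k : ℕ, μ {ω | ∃ n ≥ 1, x ≤ ∑ i ∈ Finset.range n, X i ω} ≤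
      ENNReal.ofReal (Real.exp (-(ν - ν / (k + 1)) * x)) := by
    intro k
    refine le_trans (lundberg_fixed μ X hmeas hindep hident (tk k) (htk_pos k)
      (htkS k).1 (htkS k).2 x) ?_
    apply ENNReal.ofReal_le_ofReal
    apply Real.exp_le_exp.mpr
    have := (htk_gt k).le
    nlinarith [hx]
  have htend : Filter.Tendsto (fun k : ℕ => ENNReal.ofReal (Real.exp (-(ν - ν / (k + 1)) * x)))
      Filter.atTop (nhds (ENNReal.ofReal (Real.exp (-ν * x)))) := by
    have h1 : Filter.Tendsto (fun k : ℕ => ν - ν / (k + 1)) Filter.atTop (nhds ν) := by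
      have h2 : Filter.Tendsto (fun k : ℕ => ν / (k + 1)) Filter.atTop (nhds 0) := by
        have := tendsto_one_div_add_atTop_nhds_zero_nat (𝕜 := ℝ)
        have h3 := this.const_mul ν
        simpa [div_eq_mul_inv, mul_comm] using h3
      have := (tendsto_const_nhds (x := ν) (f := Filter.atTop (α := ℕ))).sub h2
      simpa using this
    have h4 : Filter.Tendsto (fun k : ℕ => Real.exp (-(ν - ν / (k + 1)) * x))
        Filter.atTop (nhds (Real.exp (-ν * x))) := by
      apply Filter.Tendsto.comp (Real.continuous_exp.tendsto _)
      have : Filter.Tendsto (fun k : ℕ => -(ν - ν / (k + 1))) Filter.atTop (nhds (-ν)) :=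
        h1.neg
      exact this.mul_const x
    exact (ENNReal.continuous_ofReal.tendsto _).comp h4
  exact ge_of_tendsto' htend hbound
end

section
/- Let Λ: R^d → [0,∞) be convex. Suppose for some g ∈ R^d and u_G > 0, for each u in an interval (u_G − δ, u_G + δ) there is a point β(u) in the hyperplane (1/u)·H achieving the minimum of Λ over the half-space (1/u)·Ĥ, where H = ∂Ĥ is a hyperplane and Ĥ the corresponding closed half-space. Then the function u ↦ u·Λ(β(u)) is convex on (u_G − δ, u_G + δ). -/
open scoped RealInnerProductSpace

/-- If for each `u` near `u_G` the point `β(u)` on the hyperplane `(1/u)H` minimizes the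
convex rate function `Λ` over the half-space `(1/u)Ĥ`, then `u ↦ u·Λ(β(u))` is convex. -/
theorem halfspace_value_convex {d : ℕ}
    (Λ : EuclideanSpace ℝ (Fin d) → ℝ)
    (hnn : ∀ v, 0 ≤ Λ v) (hconv : ConvexOn ℝ Set.univ Λ)
    (N : EuclideanSpace ℝ (Fin d)) (hN : N ≠ 0)
    (c : ℝ) (hc : c ≠ 0)
    (uG δ : ℝ) (hδ : 0 < δ) (hpos : 0 < uG - δ)
    (β : ℝ → EuclideanSpace ℝ (Fin d))
    (hβH : ∀ u ∈ Set.Ioo (uG - δ) (uG + δ), ⟪β u, N⟫ = c / u)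
    (hβmin : ∀ u ∈ Set.Ioo (uG - δ) (uG + δ), ∀ v, c / u ≤ ⟪v, N⟫ → Λ (β u) ≤ Λ v) :
    ConvexOn ℝ (Set.Ioo (uG - δ) (uG + δ)) (fun u => u * Λ (β u)) := by
  refine ⟨convex_Ioo _ _, ?_⟩
  intro x hx y hy a b ha hb hab
  have hx0 : 0 < x := hpos.trans hx.1
  have hy0 : 0 < y := hpos.trans hy.1
  have hu0mem : a • x + b • y ∈ Set.Ioo (uG - δ) (uG + δ) :=
    (convex_Ioo _ _) hx hy ha hb hab
  set u0 : ℝ := a * x + b * y with hu0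
  have hu0mem' : u0 ∈ Set.Ioo (uG - δ) (uG + δ) := by simpa [hu0, smul_eq_mul] using hu0mem
  have hu0pos : 0 < u0 := hpos.trans hu0mem'.1
  have hu0ne : u0 ≠ 0 := ne_of_gt hu0pos
  have hwsum : a * x / u0 + b * y / u0 = 1 := by field_simp; exact hu0.symm
  set v : EuclideanSpace ℝ (Fin d) := (a * x / u0) • β x + (b * y / u0) • β y with hv
  have hvN : ⟪v, N⟫ = c / u0 := by
    have h1 := hβH x hx
    have h2 := hβH y hy
    have e1 : a * x / u0 * (c / x) = a * (c / u0) := by field_simp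
    have e2 : b * y / u0 * (c / y) = b * (c / u0) := by field_simp
    rw [hv, inner_add_left, real_inner_smul_left, real_inner_smul_left, h1, h2,
      e1, e2, ← add_mul, hab, one_mul]
  have hmin : Λ (β u0) ≤ Λ v := hβmin u0 hu0mem' v (le_of_eq hvN.symm)
  have hcv : Λ v ≤ (a * x / u0) * Λ (β x) + (b * y / u0) * Λ (β y) := by
    have := hconv.2 (Set.mem_univ (β x)) (Set.mem_univ (β y))
      (by positivity : (0:ℝ) ≤ a * x / u0) (by positivity : (0:ℝ) ≤ b * y / u0) hwsum
    simpa [smul_eq_mul, hv] using this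
  have key : u0 * Λ (β u0) ≤ a * (x * Λ (β x)) + b * (y * Λ (β y)) := by
    have h3 : u0 * Λ (β u0) ≤ u0 * Λ v := by
      exact mul_le_mul_of_nonneg_left hmin (le_of_lt hu0pos)
    have h4 : u0 * Λ v ≤ a * (x * Λ (β x)) + b * (y * Λ (β y)) := by
      have := mul_le_mul_of_nonneg_left hcv (le_of_lt hu0pos)
      calc u0 * Λ v ≤ u0 * ((a * x / u0) * Λ (β x) + (b * y / u0) * Λ (β y)) := this
        _ = a * (x * Λ (β x)) + b * (y * Λ (β y)) := by field_simp
    exact h3.trans h4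
  simpa [smul_eq_mul, hu0] using key
end
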